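/- Let S be an interlaced collection of pairwise disjoint chains containing at least two chains. Then the chain of S containing the largest of all entries has at least two entries, and the chain of S containing the smallest of all entries has at least two entries. (In particular, neither the global maximum nor the global minimum of the entries can lie in a singleton chain.) -/

import Mathlib

/-- The maximum entry of a finite set of integers (`0` for the empty set). -/
def fmax (C : Finset ℤ) : ℤ := WithBot.unbotD 0 C.max

/-- The minimum entry of a finite set of integers (`0` for the empty set). -/
def fmin (C : Finset ℤ) : ℤ := WithTop.untopD 0 C.min

/-- A *chain* is a nonempty set of integers of the form `{c, c-2, …, c-2k}`. -/
def IsChainSet (C : Finset ℤ) : Prop :=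
  ∃ (c : ℤ) (k : ℕ), C = (Finset.range (k + 1)).image (fun i : ℕ => c - 2 * (i : ℤ))

/-- Two chains with disjoint entries, with maxima `A, B` and minima `a, b`, are *linked*
if `A > B > a` or `B > A > b`. -/
def LinkedChains (C D : Finset ℤ) : Prop :=
  Disjoint C D ∧
    ((fmax D < fmax C ∧ fmin C < fmax D) ∨ (fmax C < fmax D ∧ fmin D < fmax C))

/-- The set of all entries of a collection of chains. -/
def entriesOf (S : Finset (Finset ℤ)) : Finset ℤ := S.biUnion id

/-- A finite collection of pairwise disjoint chains. -/
def IsChainCollection (S : Finset (Finset ℤ)) : Prop :=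
  (∀ C ∈ S, IsChainSet C) ∧ ∀ C ∈ S, ∀ D ∈ S, C ≠ D → Disjoint C D

/-- A collection of pairwise disjoint chains is *interlaced* if any two of its chains are
joined by a finite sequence of chains of the collection in which consecutive chains are
linked. -/
def Interlaced (S : Finset (Finset ℤ)) : Prop :=
  ∀ C ∈ S, ∀ D ∈ S,
    Relation.ReflTransGen (fun X Y => X ∈ S ∧ Y ∈ S ∧ LinkedChains X Y) C D

/-- An *admissible configuration of size `n`*: an interlaced collection of pairwise disjoint
chains of positive integers with `n` entries in total and smallest entry equal to `1`. -/
def AdmissibleConfig (n : ℕ) (S : Finset (Finset ℤ)) : Prop :=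
  IsChainCollection S ∧ Interlaced S ∧ (entriesOf S).card = n ∧
    (∀ x ∈ entriesOf S, 0 < x) ∧ (1 : ℤ) ∈ entriesOf S

lemma le_fmax' {C : Finset ℤ} {a : ℤ} (h : a ∈ C) : a ≤ fmax C := by
  obtain ⟨x, hx⟩ := Finset.max_of_nonempty ⟨a, h⟩
  have := Finset.le_max h
  rw [hx] at this
  simpa [fmax, hx] using WithBot.coe_le_coe.mp this

lemma fmin_le' {C : Finset ℤ} {a : ℤ} (h : a ∈ C) : fmin C ≤ a := by
  obtain ⟨x, hx⟩ := Finset.min_of_nonempty ⟨a, h⟩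
  have := Finset.min_le h
  rw [hx] at this
  simpa [fmin, hx] using WithTop.coe_le_coe.mp this

lemma fmax_mem' {C : Finset ℤ} (h : C.Nonempty) : fmax C ∈ C := by
  obtain ⟨x, hx⟩ := Finset.max_of_nonempty h
  simpa [fmax, hx] using Finset.mem_of_max hx

lemma fmin_mem' {C : Finset ℤ} (h : C.Nonempty) : fmin C ∈ C := by
  obtain ⟨x, hx⟩ := Finset.min_of_nonempty h
  simpa [fmin, hx] using Finset.mem_of_min hx

lemma chain_nonempty {C : Finset ℤ} (h : IsChainSet C) : C.Nonempty := by
  obtain ⟨c, k, rfl⟩ := h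
  exact (Finset.nonempty_range_iff.mpr (Nat.succ_ne_zero k)).image _

/-- In an interlaced collection of at least two pairwise disjoint chains, the chain
containing the largest entry and the chain containing the smallest entry each have at least
two entries. -/
theorem extreme_entries_not_in_singleton (S : Finset (Finset ℤ))
    (hS : IsChainCollection S) (hI : Interlaced S) (hcard : 2 ≤ S.card) :
    (∀ C ∈ S, fmax (entriesOf S) ∈ C → 2 ≤ C.card) ∧
    (∀ C ∈ S, fmin (entriesOf S) ∈ C → 2 ≤ C.card) := by
  have hmem : ∀ C ∈ S, C ⊆ entriesOf S := fun C hC => Finset.subset_biUnion_of_mem id hC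
  have hne : ∀ C ∈ S, C.Nonempty := fun C hC => chain_nonempty (hS.1 C hC)
  have hc1 : 1 < S.card := by omega
  have main : ∀ a : ℤ, ({a} : Finset ℤ) ∈ S → ∃ Y ∈ S,
      ((fmax Y < a ∧ a < fmax Y) ∨ (a < fmax Y ∧ fmin Y < a)) := by
    intro a hC
    obtain ⟨D, hD, hDne⟩ := Finset.exists_mem_ne hc1 ({a} : Finset ℤ)
    have hpath := hI _ hC D hD
    rcases hpath.cases_head with heq | ⟨Y, ⟨_, hY, _, hlink⟩, _⟩
    · exact absurd heq.symm hDne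
    · refine ⟨Y, hY, ?_⟩
      simpa [fmax, fmin, Finset.max_singleton, Finset.min_singleton] using hlink
  constructor
  · intro C hC hM
    by_contra hlt
    push_neg at hlt
    have h1 : C.card = 1 := by
      have := (hne C hC).card_pos
      omega
    obtain ⟨a, rfl⟩ := Finset.card_eq_one.mp h1
    have ha : a = fmax (entriesOf S) := (Finset.mem_singleton.mp hM).symm
    obtain ⟨Y, hY, hcase⟩ := main a hC
    have hYle : fmax Y ≤ a := by
      rw [ha]
      exact le_fmax' (hmem Y hY (fmax_mem' (hne Y hY)))
    rcases hcase with ⟨h2, h3⟩ | ⟨h2, h3⟩ <;> omega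
  · intro C hC hM
    by_contra hlt
    push_neg at hlt
    have h1 : C.card = 1 := by
      have := (hne C hC).card_pos
      omega
    obtain ⟨a, rfl⟩ := Finset.card_eq_one.mp h1
    have ha : a = fmin (entriesOf S) := (Finset.mem_singleton.mp hM).symm
    obtain ⟨Y, hY, hcase⟩ := main a hC
    have hYle : a ≤ fmin Y := by
      rw [ha]
      exact fmin_le' (hmem Y hY (fmin_mem' (hne Y hY)))
    rcases hcase with ⟨h2, h3⟩ | ⟨h2, h3⟩ <;> omega
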